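/- For a connected graph G, a set S ⊆ V(G) is a strong resolving set of G if and only if S is a vertex cover of the strong resolving graph G_SR; consequently, the strong metric dimension of G equals the vertex cover number of G_SR. -/

import Mathlib

open SimpleGraph

def maxDistantFrom {V : Type*} (G : SimpleGraph V) (u v : V) : Prop :=
  ∀ w : V, G.Adj u w → G.dist v w ≤ G.dist v u

def mmd {V : Type*} (G : SimpleGraph V) (u v : V) : Prop :=
  maxDistantFrom G u v ∧ maxDistantFrom G v u

def srGraph {V : Type*} (G : SimpleGraph V) : SimpleGraph V where
  Adj u v := u ≠ v ∧ mmd G u v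
  symm := by
    constructor
    rintro u v ⟨h1, h2, h3⟩
    exact ⟨h1.symm, h3, h2⟩
  loopless := by
    constructor
    rintro u ⟨h1, -⟩
    exact h1 rfl

def stronglyResolves {V : Type*} (G : SimpleGraph V) (w u v : V) : Prop :=
  G.dist w u = G.dist w v + G.dist v u ∨ G.dist w v = G.dist w u + G.dist u v

def isStrongResolving {V : Type*} (G : SimpleGraph V) (S : Set V) : Prop :=
  ∀ u v : V, u ≠ v → ∃ w ∈ S, stronglyResolves G w u v

noncomputable def sMetricDim {V : Type*} (G : SimpleGraph V) : ℕ :=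
  sInf {n | ∃ S : Set V, isStrongResolving G S ∧ S.ncard = n}

def isStrongMetricBasis {V : Type*} (G : SimpleGraph V) (S : Set V) : Prop :=
  isStrongResolving G S ∧ S.ncard = sMetricDim G

def isVertexCover {V : Type*} (G : SimpleGraph V) (S : Set V) : Prop :=
  ∀ u v : V, G.Adj u v → u ∈ S ∨ v ∈ S

noncomputable def vcNum {V : Type*} (G : SimpleGraph V) : ℕ :=
  sInf {n | ∃ S : Set V, isVertexCover G S ∧ S.ncard = n}

lemma dc {V : Type*} (G : SimpleGraph V) (a b : V) : G.dist a b = G.dist b a :=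
  SimpleGraph.dist_comm

lemma exists_shorter_neighbor {V : Type*} (G : SimpleGraph V) (hG : G.Connected)
    {w v : V} (h : w ≠ v) : ∃ v1, G.Adj v v1 ∧ G.dist w v1 + 1 = G.dist w v := by
  have hd : G.dist v w ≠ 0 := (hG.pos_dist_of_ne (Ne.symm h)).ne'
  obtain ⟨p, hp⟩ := SimpleGraph.exists_walk_of_dist_ne_zero hd
  cases p with
  | nil => simp at hp; exact absurd SimpleGraph.dist_self hd
  | cons hadj q =>
    rename_i b
    refine ⟨b, hadj, ?_⟩
    have h1 : G.dist b w ≤ q.length := SimpleGraph.dist_le q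
    have h2 : G.dist v w ≤ G.dist v b + G.dist b w := hG.dist_triangle
    have h3 : G.dist v b ≤ 1 := by
      rw [SimpleGraph.dist_eq_one_iff_adj.mpr hadj]
    simp only [SimpleGraph.Walk.length_cons] at hp
    rw [dc G w b, dc G w v]
    omega

lemma exists_maxDistant {V : Type*} [Fintype V] (G : SimpleGraph V) (hG : G.Connected)
    (v u : V) : ∃ u', maxDistantFrom G u' v ∧
      G.dist v u' = G.dist v u + G.dist u u' := by
  classical
  set s : Finset V := Finset.univ.filter (fun x => G.dist v x = G.dist v u + G.dist u x) with hs
  have hu : u ∈ s := by simp [hs]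
  obtain ⟨u', hu's, hmax⟩ := Finset.exists_max_image s (fun x => G.dist v x) ⟨u, hu⟩
  simp only [hs, Finset.mem_filter] at hu's
  refine ⟨u', ?_, hu's.2⟩
  intro w hadj
  by_contra hlt
  push_neg at hlt
  have h1 : G.dist u' w ≤ 1 := by rw [SimpleGraph.dist_eq_one_iff_adj.mpr hadj]
  have h2 : G.dist v w ≤ G.dist v u' + G.dist u' w := hG.dist_triangle
  have hvw : G.dist v w = G.dist v u' + 1 := by omega
  have h3 : G.dist v w ≤ G.dist v u + G.dist u w := hG.dist_triangle
  have h4 : G.dist u w ≤ G.dist u u' + G.dist u' w := hG.dist_triangle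
  have hws : w ∈ s := by
    simp only [hs, Finset.mem_filter, Finset.mem_univ, true_and]
    omega
  have := hmax w hws
  omega

lemma resolve_of_mmd {V : Type*} (G : SimpleGraph V) (hG : G.Connected)
    {w u v : V} (hm : mmd G u v) (hr : stronglyResolves G w u v) : w = u ∨ w = v := by
  rcases hr with hr | hr
  · -- d(w,u) = d(w,v) + d(v,u) : claim w = v
    right
    by_contra hwv
    obtain ⟨v1, hadj, hdv1⟩ := exists_shorter_neighbor G hG hwv
    have ht : G.dist w u ≤ G.dist w v1 + G.dist v1 u := hG.dist_triangle
    have hmd := hm.2 v1 hadj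
    rw [dc G u v1, dc G u v] at hmd
    omega
  · left
    by_contra hwu
    obtain ⟨u1, hadj, hdu1⟩ := exists_shorter_neighbor G hG hwu
    have ht : G.dist w v ≤ G.dist w u1 + G.dist u1 v := hG.dist_triangle
    have hmd := hm.1 u1 hadj
    rw [dc G v u1, dc G v u] at hmd
    omega

theorem stmt10 {V : Type*} [Fintype V] (G : SimpleGraph V) (hG : G.Connected) :
    (∀ S : Set V, isStrongResolving G S ↔ isVertexCover (srGraph G) S) ∧
    sMetricDim G = vcNum (srGraph G) := by
  have main : ∀ S : Set V, isStrongResolving G S ↔ isVertexCover (srGraph G) S := by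
    intro S
    constructor
    · intro hS u v hadj
      obtain ⟨hne, hm⟩ := hadj
      obtain ⟨w, hwS, hwr⟩ := hS u v hne
      rcases resolve_of_mmd G hG hm hwr with rfl | rfl
      · exact Or.inl hwS
      · exact Or.inr hwS
    · intro hS u v hne
      -- build u' maximally distant from v
      obtain ⟨u', hmd1, hd1⟩ := exists_maxDistant G hG v u
      -- build v' maximally distant from u'
      obtain ⟨v', hmd2, hd2⟩ := exists_maxDistant G hG u' v
      -- u' is maximally distant from v'
      have hmd1' : maxDistantFrom G u' v' := by
        intro w hadj
        have h1 : G.dist v' w ≤ G.dist v' v + G.dist v w := hG.dist_triangle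
        have h2 := hmd1 w hadj
        have h3 : G.dist u' v' = G.dist u' v + G.dist v v' := hd2
        have h4 : G.dist v' v = G.dist v v' := dc G _ _
        have h5 : G.dist v' u' = G.dist u' v' := dc G _ _
        have h6 : G.dist v u' = G.dist u' v := dc G _ _
        omega
      have hu'v' : u' ≠ v' := by
        intro h
        subst h
        have h0 : G.dist u' u' = 0 := SimpleGraph.dist_self
        have hp : 0 < G.dist v u := hG.pos_dist_of_ne (Ne.symm hne)
        have h6 : G.dist v u' = G.dist u' v := dc G _ _
        omega
      obtain hin | hin := hS u' v' ⟨hu'v', hmd1', hmd2⟩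
      · -- u' strongly resolves u v
        refine ⟨u', hin, Or.inr ?_⟩
        have h3 : G.dist u' u = G.dist u u' := dc G _ _
        have h4 : G.dist u v = G.dist v u := dc G _ _
        rw [dc G u' v]
        omega
      · -- v' strongly resolves u v
        refine ⟨v', hin, Or.inl ?_⟩
        have h1 : G.dist u v' ≤ G.dist u v + G.dist v v' := hG.dist_triangle
        have h2 : G.dist u' v' ≤ G.dist u' u + G.dist u v' := hG.dist_triangle
        have h3 : G.dist u' u = G.dist u u' := dc G _ _
        have h4 : G.dist v u' = G.dist u' v := dc G _ _
        have h5 : G.dist v u = G.dist u v := dc G _ _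
        rw [dc G v' u, dc G v' v,
          dc G v u]
        omega
  refine ⟨main, ?_⟩
  unfold sMetricDim vcNum
  congr 1
  ext n
  constructor
  · rintro ⟨S, h1, h2⟩; exact ⟨S, (main S).mp h1, h2⟩
  · rintro ⟨S, h1, h2⟩; exact ⟨S, (main S).mpr h1, h2⟩
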